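/- Let ρ > 1, σ̂² > 0, P > 0, L > 0, and h ≥ 0. If σ² is log-uniform on [σ̂²/ρ, ρσ̂²] with density 1/(2 ln(ρ)x), then E[ln(1 + P L h/σ²)] = (1/(2 ln ρ)) [Li₂(−P L h/(ρσ̂²)) − Li₂(−ρ P L h/σ̂²)], where Li₂ is the dilogarithm. -/

import Mathlib

open Real intervalIntegral

/-- The dilogarithm Li₂(z) = -∫₀^z ln(1-t)/t dt. -/
noncomputable def Li2 (z : ℝ) : ℝ :=
  -∫ t in (0:ℝ)..z, Real.log (1 - t) / t

namespace Li2Aux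

noncomputable def f2 (t : ℝ) : ℝ := Real.log (1 - t) / t

lemma contAt_f2 {t : ℝ} (h0 : t ≠ 0) (h1 : t < 1) : ContinuousAt f2 t := by
  have h1' : (1 : ℝ) - t ≠ 0 := by intro h; linarith [sub_eq_zero.mp h]
  exact ((Real.continuousAt_log h1').comp
    ((continuous_const.sub continuous_id).continuousAt)).div continuousAt_id h0

lemma contOn_f2 : ContinuousOn f2 (Set.Iio 0) :=
  fun t ht => (contAt_f2 (ne_of_lt ht) (ht.trans one_pos)).continuousWithinAt

lemma tendsto_f2 : Filter.Tendsto f2 (nhdsWithin 0 {(0:ℝ)}ᶜ) (nhds (-1)) := by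
  have hF : HasDerivAt (fun t : ℝ => Real.log (1 - t)) (-1) 0 := by
    have h1 : HasDerivAt (fun t : ℝ => 1 - t) (-1) 0 :=
      (hasDerivAt_id 0).const_sub 1
    have h2 := (Real.hasDerivAt_log (by norm_num : (1:ℝ) - 0 ≠ 0)).comp 0 h1
    simpa [Function.comp_def] using h2
  have := hasDerivAt_iff_tendsto_slope.mp hF
  refine this.congr ?_
  intro t
  simp [slope_def_field, f2]

noncomputable def g2 (t : ℝ) : ℝ := if t = 0 then -1 else f2 t

lemma contAt_g2_zero : ContinuousAt g2 0 := by
  have h : Filter.Tendsto g2 (nhdsWithin 0 {(0:ℝ)}ᶜ) (nhds (-1)) := by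
    refine tendsto_f2.congr' ?_
    filter_upwards [self_mem_nhdsWithin] with x hx
    simp [g2, Set.mem_compl_singleton_iff.mp hx]
  rw [← continuousWithinAt_compl_self]
  simpa [ContinuousWithinAt, g2] using h

lemma contOn_g2 : ContinuousOn g2 (Set.Iio 1) := by
  intro t ht
  rcases eq_or_ne t 0 with rfl | h0
  · exact contAt_g2_zero.continuousWithinAt
  · refine ((contAt_f2 h0 ht).congr ?_).continuousWithinAt
    filter_upwards [isOpen_compl_singleton.mem_nhds h0] with x hx
    simp [g2, Set.mem_compl_singleton_iff.mp hx]

lemma intervalIntegrable_f2 {z : ℝ} (hz : z ≤ 0) :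
    IntervalIntegrable f2 MeasureTheory.volume z 0 := by
  have hsub : Set.uIcc z 0 ⊆ Set.Iio 1 := by
    intro x hx
    have hx' : x ≤ 0 := by
      rcases Set.mem_uIcc.mp hx with h | h
      · exact h.2
      · exact h.2.trans hz
    exact lt_of_le_of_lt hx' one_pos
  have hg : IntervalIntegrable g2 MeasureTheory.volume z 0 :=
    (contOn_g2.mono hsub).intervalIntegrable
  refine hg.congr_ae ?_
  have h0 : ∀ᵐ (t : ℝ) ∂(MeasureTheory.volume), t ≠ 0 := by
    refine MeasureTheory.ae_iff.mpr ?_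
    simpa using Real.volume_singleton (a := 0)
  refine MeasureTheory.ae_restrict_of_ae ?_
  filter_upwards [h0] with t ht
  simp [g2, ht]

lemma hasDerivAt_Li2 {z : ℝ} (hz : z < 0) :
    HasDerivAt Li2 (-(Real.log (1 - z) / z)) z := by
  have smf : StronglyMeasurableAtFilter f2 (nhds z) MeasureTheory.volume :=
    contOn_f2.stronglyMeasurableAtFilter isOpen_Iio _ hz
  have H := intervalIntegral.integral_hasDerivAt_right
    ((intervalIntegrable_f2 hz.le).symm) smf (contAt_f2 (ne_of_lt hz) (hz.trans one_pos))
  have := H.neg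
  exact this



lemma hasDerivAt_F {c x : ℝ} (hc : 0 < c) (hx : 0 < x) :
    HasDerivAt (fun y => Li2 (-c / y)) (Real.log (1 + c / x) / x) x := by
  have hz : -c / x < 0 := div_neg_of_neg_of_pos (neg_neg_of_pos hc) hx
  have hinner : HasDerivAt (fun y : ℝ => -c / y) (c / x ^ 2) x := by
    have h := (hasDerivAt_inv (ne_of_gt hx)).const_mul (-c)
    have : -c * -(x ^ 2)⁻¹ = c / x ^ 2 := by field_simp
    simpa [div_eq_mul_inv, this] using h
  have H := (Li2Aux.hasDerivAt_Li2 hz).comp x hinner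
  refine H.congr_deriv ?_
  have h1 : 1 - -c / x = 1 + c / x := by ring
  rw [h1]
  field_simp

end Li2Aux

/-- The ergodic capacity averaged over log-uniform noise uncertainty
(inner expectation in Theorems 3 and 6). -/
theorem avg_log_snr_logUniform
    (ρ σ2 P L h : ℝ) (hρ : 1 < ρ) (hσ : 0 < σ2) (hP : 0 < P) (hL : 0 < L)
    (hh : 0 ≤ h) :
    ∫ x in (σ2 / ρ)..(ρ * σ2),
        Real.log (1 + P * L * h / x) * (1 / (2 * Real.log ρ * x)) =
      (1 / (2 * Real.log ρ)) *
        (Li2 (-(P * L * h) / (ρ * σ2)) - Li2 (-(ρ * P * L * h) / σ2)) := by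
  rcases hh.eq_or_lt with rfl | hh'
  · simp [Li2]
  have hρ0 : (0:ℝ) < ρ := lt_trans one_pos hρ
  set c : ℝ := P * L * h with hc_def
  have hc : 0 < c := by positivity
  have ha : 0 < σ2 / ρ := div_pos hσ hρ0
  have hb : 0 < ρ * σ2 := mul_pos hρ0 hσ
  have hab : σ2 / ρ ≤ ρ * σ2 := by
    rw [div_le_iff₀ hρ0]
    nlinarith
  have hpos : ∀ x ∈ Set.uIcc (σ2 / ρ) (ρ * σ2), 0 < x := by
    intro x hx
    rw [Set.uIcc_of_le hab] at hx
    exact lt_of_lt_of_le ha hx.1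
  have hderiv : ∀ x ∈ Set.uIcc (σ2 / ρ) (ρ * σ2),
      HasDerivAt (fun y => Li2 (-c / y)) (Real.log (1 + c / x) / x) x :=
    fun x hx => Li2Aux.hasDerivAt_F hc (hpos x hx)
  have hcont : ContinuousOn (fun x => Real.log (1 + c / x) / x)
      (Set.uIcc (σ2 / ρ) (ρ * σ2)) := by
    have h1 : ContinuousOn (fun x : ℝ => 1 + c / x) (Set.uIcc (σ2 / ρ) (ρ * σ2)) :=
      continuousOn_const.add (continuousOn_const.div continuousOn_id
        fun x hx => (hpos x hx).ne')
    exact ((h1.log fun x hx => by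
      have := hpos x hx
      have : 0 < 1 + c / x := by positivity
      exact this.ne').div continuousOn_id fun x hx => (hpos x hx).ne')
  have key : ∫ x in (σ2 / ρ)..(ρ * σ2), Real.log (1 + c / x) / x =
      Li2 (-c / (ρ * σ2)) - Li2 (-c / (σ2 / ρ)) :=
    intervalIntegral.integral_eq_sub_of_hasDerivAt hderiv hcont.intervalIntegrable
  have hrw : ∀ x : ℝ, Real.log (1 + c / x) * (1 / (2 * Real.log ρ * x)) =
      (1 / (2 * Real.log ρ)) * (Real.log (1 + c / x) / x) := by
    intro x
    simp only [one_div, mul_inv, div_eq_mul_inv]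
    ring
  calc ∫ x in (σ2 / ρ)..(ρ * σ2), Real.log (1 + c / x) * (1 / (2 * Real.log ρ * x))
      = ∫ x in (σ2 / ρ)..(ρ * σ2), (1 / (2 * Real.log ρ)) * (Real.log (1 + c / x) / x) := by
        simp_rw [hrw]
    _ = (1 / (2 * Real.log ρ)) * ∫ x in (σ2 / ρ)..(ρ * σ2), Real.log (1 + c / x) / x := by
        rw [intervalIntegral.integral_const_mul]
    _ = (1 / (2 * Real.log ρ)) * (Li2 (-c / (ρ * σ2)) - Li2 (-c / (σ2 / ρ))) := by rw [key]
    _ = (1 / (2 * Real.log ρ)) * (Li2 (-(P * L * h) / (ρ * σ2)) - Li2 (-(ρ * P * L * h) / σ2)) := by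
        have h1 : -c / (σ2 / ρ) = -(ρ * P * L * h) / σ2 := by
          rw [div_div_eq_mul_div, hc_def]; ring
        rw [h1, hc_def]
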